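/- (Fractional discrete Poincaré inequality.) Let h>0 and 0<s<1/2. There is a constant C_s>0 depending only on s (independent of h) such that for every finitely supported u:ℤ→ℝ: (h·Σ_{j∈ℤ}|u_j|²)^{1/2} ≤ C_s·h^s·(#supp(u))^s·((h/2)·Σ_{j∈ℤ}Σ_{m∈ℤ, m≠j} |u_j−u_m|²·K_s^h(j−m))^{1/2}, where #supp(u) is the number of j∈ℤ with u_j ≠ 0. -/

import Mathlib

/-- The kernel of the fractional discrete Laplacian on the mesh of size `h`. -/
noncomputable def Ksh (h s : ℝ) (m : ℤ) : ℝ :=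
  if m = 0 then 0 else
    ((4 : ℝ) ^ s * Real.Gamma (1/2 + s) / (Real.sqrt Real.pi * (Real.Gamma (1 - s) / s))) *
      (Real.Gamma (|(m : ℝ)| - s) / (h ^ (2 * s) * Real.Gamma (|(m : ℝ)| + 1 + s)))

open Real

lemma gamma_interp {x y t : ℝ} (hx : 0 < x) (hy : 0 < y) (ht0 : 0 ≤ t) (ht1 : t ≤ 1) :
    Real.Gamma (t * x + (1 - t) * y) ≤ Real.Gamma x ^ t * Real.Gamma y ^ (1 - t) := by
  have h := Real.convexOn_log_Gamma.2 (Set.mem_Ioi.2 hx)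
    (Set.mem_Ioi.2 hy) ht0 (show (0:ℝ) ≤ 1 - t by linarith) (show t + (1 - t) = 1 by ring)
  simp only [smul_eq_mul, Function.comp_apply] at h
  have hz : 0 < t * x + (1 - t) * y := by
    rcases eq_or_lt_of_le ht0 with h0 | h0
    · nlinarith
    · nlinarith
  have hgz := Real.Gamma_pos_of_pos hz
  have hgx := Real.Gamma_pos_of_pos hx
  have hgy := Real.Gamma_pos_of_pos hy
  calc Real.Gamma (t * x + (1 - t) * y)
      = Real.exp (Real.log (Real.Gamma (t * x + (1 - t) * y))) := (Real.exp_log hgz).symm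
    _ ≤ Real.exp (t * Real.log (Real.Gamma x) + (1 - t) * Real.log (Real.Gamma y)) :=
        Real.exp_le_exp.2 h
    _ = Real.Gamma x ^ t * Real.Gamma y ^ (1 - t) := by
        rw [Real.exp_add, Real.rpow_def_of_pos hgx, Real.rpow_def_of_pos hgy,
          mul_comm (Real.log (Real.Gamma x)), mul_comm (Real.log (Real.Gamma y))]

variable {s : ℝ}

lemma L1 (hs0 : 0 < s) (hs1 : s < 1/2) {y : ℝ} (hy : 0 < y) :
    Real.Gamma (y + 2*s) ≤ Real.Gamma y * y ^ (2*s) := by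
  have h := gamma_interp hy (by linarith : (0:ℝ) < y + 1)
    (t := 1 - 2*s) (by linarith) (by linarith)
  have e : (1 - 2*s) * y + (1 - (1 - 2*s)) * (y + 1) = y + 2*s := by ring
  rw [e] at h
  have hG1 : Real.Gamma (y + 1) = y * Real.Gamma y := Real.Gamma_add_one hy.ne'
  have hgy := Real.Gamma_pos_of_pos hy
  calc Real.Gamma (y + 2*s) ≤ Real.Gamma y ^ (1 - 2*s) * Real.Gamma (y+1) ^ (1 - (1 - 2*s)) := h
    _ = Real.Gamma y ^ (1 - 2*s) * (y * Real.Gamma y) ^ (2*s) := by rw [hG1]; norm_num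
    _ = Real.Gamma y * y ^ (2*s) := by
        rw [Real.mul_rpow hy.le hgy.le,
          show Real.Gamma y ^ (1-2*s) * (y ^ (2*s) * Real.Gamma y ^ (2*s)) =
            (Real.Gamma y ^ (1-2*s) * Real.Gamma y ^ (2*s)) * y ^ (2*s) by ring,
          ← Real.rpow_add hgy]
        norm_num

lemma L2 (hs0 : 0 < s) (hs1 : s < 1/2) {y : ℝ} (hy : 0 < y) :
    Real.Gamma (y + 1) ≤ Real.Gamma (y + 2*s) * (y + 2*s) ^ (1 - 2*s) := by
  have hz : (0:ℝ) < y + 2*s := by linarith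
  have h := gamma_interp hz (by linarith : (0:ℝ) < y + 1 + 2*s)
    (t := 2*s) (by linarith) (by linarith)
  have e : (2*s) * (y + 2*s) + (1 - 2*s) * (y + 1 + 2*s) = y + 1 := by ring
  rw [e] at h
  have hG1 : Real.Gamma (y + 1 + 2*s) = (y + 2*s) * Real.Gamma (y + 2*s) := by
    rw [show y + 1 + 2*s = (y + 2*s) + 1 by ring, Real.Gamma_add_one hz.ne']
  have hgz := Real.Gamma_pos_of_pos hz
  calc Real.Gamma (y + 1)
      ≤ Real.Gamma (y + 2*s) ^ (2*s) * Real.Gamma (y + 1 + 2*s) ^ (1 - 2*s) := h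
    _ = Real.Gamma (y + 2*s) ^ (2*s) * ((y + 2*s) * Real.Gamma (y + 2*s)) ^ (1 - 2*s) := by
        rw [hG1]
    _ = Real.Gamma (y + 2*s) * (y + 2*s) ^ (1 - 2*s) := by
        rw [Real.mul_rpow hz.le hgz.le,
          show Real.Gamma (y+2*s) ^ (2*s) * ((y+2*s) ^ (1-2*s) * Real.Gamma (y+2*s) ^ (1-2*s)) =
            (Real.Gamma (y+2*s) ^ (2*s) * Real.Gamma (y+2*s) ^ (1-2*s)) * (y+2*s) ^ (1-2*s) by ring,
          ← Real.rpow_add hgz]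
        norm_num

lemma ratio_ub (hs0 : 0 < s) (hs1 : s < 1/2) {k : ℝ} (hk : 1 ≤ k) :
    Real.Gamma (k + 1 + s) ≤ 2 * k ^ (1 + 2*s) * Real.Gamma (k - s) := by
  have hks : 0 < k - s := by linarith
  have hk0 : (0:ℝ) < k := by linarith
  have h1 : Real.Gamma (k + s) ≤ Real.Gamma (k - s) * k ^ (2*s) := by
    have := L1 hs0 hs1 hks
    rw [show k - s + 2*s = k + s by ring] at this
    refine this.trans ?_
    exact mul_le_mul_of_nonneg_left
      (Real.rpow_le_rpow hks.le (by linarith) (by linarith))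
      (Real.Gamma_pos_of_pos hks).le
  have hG : Real.Gamma (k + 1 + s) = (k + s) * Real.Gamma (k + s) := by
    rw [show k + 1 + s = (k + s) + 1 by ring, Real.Gamma_add_one (by positivity)]
  rw [hG]
  have hks2 : k + s ≤ 2 * k := by linarith
  have hrp : k ^ (1 + 2*s) = k * k ^ (2*s) := by
    rw [Real.rpow_add hk0, Real.rpow_one]
  rw [hrp]
  have hGpos := Real.Gamma_pos_of_pos (show (0:ℝ) < k + s by linarith)
  calc (k + s) * Real.Gamma (k + s) ≤ (2*k) * (Real.Gamma (k - s) * k ^ (2*s)) := by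
        apply mul_le_mul hks2 h1 hGpos.le (by linarith)
    _ = 2 * (k * k ^ (2*s)) * Real.Gamma (k - s) := by ring

lemma ratio_lb (hs0 : 0 < s) (hs1 : s < 1/2) {k : ℝ} (hk : 1 ≤ k) :
    (1/2) * k ^ (1 + 2*s) * Real.Gamma (k - s) ≤ Real.Gamma (k + 1 + s) := by
  have hks : 0 < k - s := by linarith
  have hk0 : (0:ℝ) < k := by linarith
  have hkps : (0:ℝ) < k + s := by linarith
  have h2 := L2 hs0 hs1 hks
  rw [show k - s + 2*s = k + s by ring, show k - s + 1 = (k - s) + 1 by ring,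
    Real.Gamma_add_one hks.ne'] at h2
  -- h2 : (k - s) * Γ(k-s) ≤ Γ(k+s) * (k+s)^(1-2s)
  have hGks := Real.Gamma_pos_of_pos hks
  have hGkps := Real.Gamma_pos_of_pos hkps
  have h3 : (k - s) * Real.Gamma (k - s) * (k + s) ^ (2*s - 1) ≤ Real.Gamma (k + s) := by
    have hp : (0:ℝ) < (k + s) ^ (1 - 2*s) := Real.rpow_pos_of_pos hkps _
    rw [show (2*s - 1 : ℝ) = -(1 - 2*s) by ring, Real.rpow_neg hkps.le]
    rw [mul_comm ((k - s) * Real.Gamma (k - s)), ← div_eq_inv_mul (α := ℝ), div_le_iff₀ hp]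
    linarith [h2]
  have hG : Real.Gamma (k + 1 + s) = (k + s) * Real.Gamma (k + s) := by
    rw [show k + 1 + s = (k + s) + 1 by ring, Real.Gamma_add_one hkps.ne']
  rw [hG]
  have h4 : (k - s) * (k + s) ^ (2*s) * Real.Gamma (k - s) ≤ (k + s) * Real.Gamma (k + s) := by
    calc (k - s) * (k + s) ^ (2*s) * Real.Gamma (k - s)
        = (k + s) * ((k - s) * Real.Gamma (k - s) * (k + s) ^ (2*s - 1)) := by
          rw [show (2*s - 1 : ℝ) = 2*s + (-1) by ring, Real.rpow_add hkps,
            Real.rpow_neg_one]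
          field_simp
      _ ≤ (k + s) * Real.Gamma (k + s) := by
          exact mul_le_mul_of_nonneg_left h3 hkps.le
  refine le_trans ?_ h4
  have h5 : k ^ (2*s) ≤ (k + s) ^ (2*s) := by
    apply Real.rpow_le_rpow hk0.le (by linarith) (by linarith)
  have h6 : (1/2 : ℝ) * k ≤ k - s := by linarith
  have hrp : k ^ (1 + 2*s) = k * k ^ (2*s) := by
    rw [Real.rpow_add hk0, Real.rpow_one]
  rw [hrp]
  calc 1/2 * (k * k ^ (2*s)) * Real.Gamma (k - s)
      = (1/2 * k) * k ^ (2*s) * Real.Gamma (k - s) := by ring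
    _ ≤ (k - s) * (k + s) ^ (2*s) * Real.Gamma (k - s) := by
        apply mul_le_mul_of_nonneg_right _ hGks.le
        apply mul_le_mul h6 h5 (by positivity) hks.le
    _ = (k - s) * (k + s) ^ (2*s) * Real.Gamma (k - s) := rfl

noncomputable def c0 (s : ℝ) : ℝ :=
  (4 : ℝ) ^ s * Real.Gamma (1/2 + s) / (Real.sqrt Real.pi * (Real.Gamma (1 - s) / s))

lemma c0_pos (hs0 : 0 < s) (hs1 : s < 1/2) : 0 < c0 s := by
  unfold c0
  have h1 : (0:ℝ) < (4:ℝ) ^ s := Real.rpow_pos_of_pos (by norm_num) _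
  have h2 : 0 < Real.Gamma (1/2 + s) := Real.Gamma_pos_of_pos (by linarith)
  have h3 : 0 < Real.sqrt Real.pi := Real.sqrt_pos.2 Real.pi_pos
  have h4 : 0 < Real.Gamma (1 - s) := Real.Gamma_pos_of_pos (by linarith)
  positivity

lemma one_le_abs_cast {m : ℤ} (hm : m ≠ 0) : (1:ℝ) ≤ |(m:ℝ)| := by
  rw [← Int.cast_abs]
  exact_mod_cast Int.one_le_abs hm

lemma Ksh_eq {h : ℝ} {m : ℤ} (hm : m ≠ 0) :
    Ksh h s m = c0 s * (Real.Gamma (|(m : ℝ)| - s) /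
      (h ^ (2 * s) * Real.Gamma (|(m : ℝ)| + 1 + s))) := by
  rw [Ksh, if_neg hm]; rfl

lemma Ksh_nonneg (hs0 : 0 < s) (hs1 : s < 1/2) {h : ℝ} (hh : 0 < h) (m : ℤ) :
    0 ≤ Ksh h s m := by
  rcases eq_or_ne m 0 with rfl | hm
  · simp [Ksh]
  · rw [Ksh_eq hm]
    have hk := one_le_abs_cast hm
    have h1 : 0 < Real.Gamma (|(m:ℝ)| - s) := Real.Gamma_pos_of_pos (by linarith)
    have h2 : 0 < Real.Gamma (|(m:ℝ)| + 1 + s) := Real.Gamma_pos_of_pos (by linarith)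
    have h3 : (0:ℝ) < h ^ (2*s) := Real.rpow_pos_of_pos hh _
    have := c0_pos hs0 hs1
    positivity

lemma Ksh_lb (hs0 : 0 < s) (hs1 : s < 1/2) {h : ℝ} (hh : 0 < h) {m : ℤ} (hm : m ≠ 0) :
    c0 s / (2 * h ^ (2*s) * |(m:ℝ)| ^ (1 + 2*s)) ≤ Ksh h s m := by
  rw [Ksh_eq hm]
  set k := |(m:ℝ)| with hkdef
  have hk : 1 ≤ k := one_le_abs_cast hm
  have hA : 0 < Real.Gamma (k - s) := Real.Gamma_pos_of_pos (by linarith)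
  have hB : 0 < Real.Gamma (k + 1 + s) := Real.Gamma_pos_of_pos (by linarith)
  have hhp : (0:ℝ) < h ^ (2*s) := Real.rpow_pos_of_pos hh _
  have hkp : (0:ℝ) < k ^ (1 + 2*s) := Real.rpow_pos_of_pos (by linarith) _
  have hc := c0_pos hs0 hs1
  have key := ratio_ub hs0 hs1 hk
  rw [mul_div_assoc' (c0 s), div_le_div_iff₀ (by positivity) (by positivity)]
  calc c0 s * (h ^ (2*s) * Real.Gamma (k + 1 + s))
      ≤ c0 s * (h ^ (2*s) * (2 * k ^ (1 + 2*s) * Real.Gamma (k - s))) := by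
        apply mul_le_mul_of_nonneg_left _ hc.le
        exact mul_le_mul_of_nonneg_left key hhp.le
    _ = c0 s * Real.Gamma (k - s) * (2 * h ^ (2*s) * k ^ (1 + 2*s)) := by ring

lemma Ksh_ub (hs0 : 0 < s) (hs1 : s < 1/2) {h : ℝ} (hh : 0 < h) (m : ℤ) :
    Ksh h s m ≤ (2 * c0 s / h ^ (2*s)) * |(m:ℝ)| ^ (-(1 + 2*s)) := by
  rcases eq_or_ne m 0 with rfl | hm
  · rw [show |((0:ℤ):ℝ)| = 0 by simp,
      Real.zero_rpow (show -(1+2*s) ≠ 0 by intro hc; nlinarith), mul_zero, Ksh, if_pos rfl]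
  · rw [Ksh_eq hm]
    set k := |(m:ℝ)| with hkdef
    have hk : 1 ≤ k := one_le_abs_cast hm
    have hk0 : (0:ℝ) < k := by linarith
    have hA : 0 < Real.Gamma (k - s) := Real.Gamma_pos_of_pos (by linarith)
    have hB : 0 < Real.Gamma (k + 1 + s) := Real.Gamma_pos_of_pos (by linarith)
    have hhp : (0:ℝ) < h ^ (2*s) := Real.rpow_pos_of_pos hh _
    have hkp : (0:ℝ) < k ^ (1 + 2*s) := Real.rpow_pos_of_pos hk0 _
    have hc := c0_pos hs0 hs1
    have key := ratio_lb hs0 hs1 hk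
    rw [Real.rpow_neg hk0.le, mul_div_assoc' (c0 s),
      show (2 * c0 s / h ^ (2*s)) * (k ^ (1 + 2*s))⁻¹
        = (2 * c0 s) / (h ^ (2*s) * k ^ (1 + 2*s)) by field_simp,
      div_le_div_iff₀ (by positivity) (by positivity)]
    calc c0 s * Real.Gamma (k - s) * (h ^ (2*s) * k ^ (1 + 2*s))
        = c0 s * (h ^ (2*s) * (2 * (1/2 * k ^ (1 + 2*s) * Real.Gamma (k - s)))) := by ring
      _ ≤ c0 s * (h ^ (2*s) * (2 * Real.Gamma (k + 1 + s))) := by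
          apply mul_le_mul_of_nonneg_left _ hc.le
          apply mul_le_mul_of_nonneg_left _ hhp.le
          exact mul_le_mul_of_nonneg_left key (by norm_num)
      _ = 2 * c0 s * (h ^ (2*s) * Real.Gamma (k + 1 + s)) := by ring

lemma Ksh_summable (hs0 : 0 < s) (hs1 : s < 1/2) {h : ℝ} (hh : 0 < h) :
    Summable (fun m : ℤ => Ksh h s m) := by
  apply Summable.of_nonneg_of_le (Ksh_nonneg hs0 hs1 hh) (Ksh_ub hs0 hs1 hh)
  exact (Real.summable_abs_int_rpow (by linarith)).mul_left _

/-- Fractional discrete Poincaré inequality. -/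
theorem fractional_discrete_Poincare (s : ℝ) (hs0 : 0 < s) (hs1 : s < 1/2) :
    ∃ C : ℝ, 0 < C ∧ ∀ h : ℝ, 0 < h → ∀ u : ℤ → ℝ, (Function.support u).Finite →
      (h * ∑' j : ℤ, |u j| ^ (2 : ℝ)) ^ ((1 : ℝ) / 2) ≤
        C * h ^ s * (Set.ncard (Function.support u) : ℝ) ^ s *
          (h / 2 * ∑' j : ℤ, ∑' m : ℤ,
            |u j - u m| ^ (2 : ℝ) * Ksh h s (j - m)) ^ ((1 : ℝ) / 2) := by
  have hc : 0 < c0 s := c0_pos hs0 hs1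
  have hD : (0:ℝ) < (2:ℝ) ^ (3 + 2*s) / c0 s := by
    have := Real.rpow_pos_of_pos (show (0:ℝ) < 2 by norm_num) (3 + 2*s)
    positivity
  refine ⟨Real.sqrt ((2:ℝ) ^ (3 + 2*s) / c0 s), Real.sqrt_pos.2 hD, ?_⟩
  intro h hh u hu
  have habs : ∀ x : ℝ, |x| ^ (2:ℝ) = x ^ 2 := fun x => by
    rw [show (2:ℝ) = ((2:ℕ):ℝ) by norm_num, Real.rpow_natCast, sq_abs]
  simp only [habs]
  set S : Finset ℤ := hu.toFinset with hSdef
  have hmemS : ∀ m : ℤ, m ∉ S → u m = 0 := by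
    intro m hm
    by_contra h0
    exact hm (hu.mem_toFinset.2 h0)
  set N : ℕ := S.card with hNdef
  have hN : (Set.ncard (Function.support u) : ℝ) = (N : ℝ) := by
    rw [Set.ncard_eq_toFinset_card _ hu]
  rw [hN]
  -- nonnegativity of kernel and terms
  have hK0 : ∀ m : ℤ, 0 ≤ Ksh h s m := Ksh_nonneg hs0 hs1 hh
  have hterm : ∀ j m : ℤ, 0 ≤ (u j - u m) ^ 2 * Ksh h s (j - m) :=
    fun j m => mul_nonneg (sq_nonneg _) (hK0 _)
  set g : ℤ → ℝ := fun j => ∑' m : ℤ, (u j - u m) ^ 2 * Ksh h s (j - m) with hgdef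
  have hg0 : ∀ j, 0 ≤ g j := fun j => tsum_nonneg (hterm j)
  have hKsum : Summable (fun m : ℤ => Ksh h s m) := Ksh_summable hs0 hs1 hh
  have KsJ : ∀ j : ℤ, Summable (fun m : ℤ => Ksh h s (j - m)) := by
    intro j
    exact ((Equiv.subLeft j).summable_iff (f := fun m : ℤ => Ksh h s m)).2 hKsum
  have KsJ' : ∀ m : ℤ, Summable (fun j : ℤ => Ksh h s (j - m)) := by
    intro m
    exact ((Equiv.subRight m).summable_iff (f := fun j : ℤ => Ksh h s j)).2 hKsum
  have hbound : ∀ j m : ℤ, (u j - u m) ^ 2 * Ksh h s (j - m) ≤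
      2 * u j ^ 2 * Ksh h s (j - m) + 2 * u m ^ 2 * Ksh h s (j - m) := by
    intro j m
    have h1 : (u j - u m) ^ 2 ≤ 2 * u j ^ 2 + 2 * u m ^ 2 := by nlinarith [sq_nonneg (u j + u m)]
    calc (u j - u m) ^ 2 * Ksh h s (j - m)
        ≤ (2 * u j ^ 2 + 2 * u m ^ 2) * Ksh h s (j - m) :=
          mul_le_mul_of_nonneg_right h1 (hK0 _)
      _ = 2 * u j ^ 2 * Ksh h s (j - m) + 2 * u m ^ 2 * Ksh h s (j - m) := by ring
  have hsum2 : ∀ j : ℤ, Summable (fun m : ℤ => 2 * u m ^ 2 * Ksh h s (j - m)) := by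
    intro j
    apply summable_of_ne_finset_zero (s := S)
    intro m hm
    rw [hmemS m hm]
    ring
  have hsumbd : ∀ j : ℤ, Summable (fun m : ℤ =>
      2 * u j ^ 2 * Ksh h s (j - m) + 2 * u m ^ 2 * Ksh h s (j - m)) := by
    intro j
    exact ((KsJ j).mul_left (2 * u j ^ 2)).add (hsum2 j)
  have F1 : ∀ j : ℤ, Summable (fun m : ℤ => (u j - u m) ^ 2 * Ksh h s (j - m)) := by
    intro j
    exact Summable.of_nonneg_of_le (hterm j) (hbound j) (hsumbd j)
  -- summability of g
  set T : ℝ := ∑' m : ℤ, Ksh h s m with hTdef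
  have hTj : ∀ j : ℤ, ∑' m : ℤ, Ksh h s (j - m) = T :=
    fun j => (Equiv.subLeft j).tsum_eq (fun m : ℤ => Ksh h s m)
  set G : ℤ → ℝ := fun j => 2 * u j ^ 2 * T + ∑ m ∈ S, 2 * u m ^ 2 * Ksh h s (j - m) with hGdef
  have hgG : ∀ j, g j ≤ G j := by
    intro j
    have h1 : g j ≤ ∑' m : ℤ, (2 * u j ^ 2 * Ksh h s (j - m) + 2 * u m ^ 2 * Ksh h s (j - m)) :=
      Summable.tsum_le_tsum (hbound j) (F1 j) (hsumbd j)
    have h2 : ∑' m : ℤ, (2 * u j ^ 2 * Ksh h s (j - m) + 2 * u m ^ 2 * Ksh h s (j - m)) = G j := by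
      rw [Summable.tsum_add ((KsJ j).mul_left (2 * u j ^ 2)) (hsum2 j)]
      congr 1
      · rw [tsum_mul_left, hTj j]
      · exact tsum_eq_sum (fun m hm => by rw [hmemS m hm]; ring)
    exact h1.trans h2.le
  have hGsum : Summable G := by
    apply Summable.add
    · apply summable_of_ne_finset_zero (s := S)
      intro j hj
      rw [hmemS j hj]
      ring
    · exact summable_sum (fun m _ => (KsJ' m).mul_left (2 * u m ^ 2))
  have F3 : Summable g := Summable.of_nonneg_of_le hg0 hgG hGsum
  -- case N = 0
  rcases Nat.eq_zero_or_pos N with hN0 | hN1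
  · have hu0 : ∀ j, u j = 0 := by
      intro j
      apply hmemS
      simp [hNdef] at hN0
      simp [hN0]
    rw [show (∑' j : ℤ, u j ^ 2) = 0 by simp [hu0], mul_zero,
      Real.zero_rpow (by norm_num : (1:ℝ)/2 ≠ 0)]
    have h1 : (0:ℝ) ≤ h / 2 * tsum g := mul_nonneg (by linarith) (tsum_nonneg hg0)
    exact mul_nonneg (mul_nonneg (mul_nonneg (Real.sqrt_nonneg _)
      (Real.rpow_nonneg hh.le s)) (Real.rpow_nonneg (Nat.cast_nonneg N) s))
      (Real.rpow_nonneg h1 _)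
  -- main case
  have hNR : (0:ℝ) < (N:ℝ) := by exact_mod_cast hN1
  set B : ℝ := 2 * h ^ (2*s) * ((2*N : ℝ)) ^ (1 + 2*s) / c0 s with hBdef
  have hB : 0 < B := by
    have h1 : (0:ℝ) < h ^ (2*s) := Real.rpow_pos_of_pos hh _
    have h2 : (0:ℝ) < ((2*N : ℝ)) ^ (1 + 2*s) := Real.rpow_pos_of_pos (by positivity) _
    positivity
  -- key pointwise bound
  have F4 : ∀ j ∈ S, (N:ℝ) * u j ^ 2 ≤ B * g j := by
    intro j hj
    set Z : Finset ℤ := Finset.Ioc j (j + 2*(N:ℤ)) \ S with hZdef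
    have hZcard : N ≤ Z.card := by
      have h1 : (Finset.Ioc j (j + 2*(N:ℤ))).card = 2*N := by
        rw [Int.card_Ioc]
        omega
      have h2 : (Finset.Ioc j (j + 2*(N:ℤ))).card - S.card ≤ Z.card :=
        Finset.le_card_sdiff S _
      omega
    have hZ0 : ∀ m ∈ Z, u m = 0 := by
      intro m hm
      exact hmemS m (Finset.mem_sdiff.1 hm).2
    have step1 : (N:ℝ) * u j ^ 2 ≤ ∑ m ∈ Z, (u j - u m) ^ 2 := by
      have e : ∑ m ∈ Z, (u j - u m) ^ 2 = (Z.card : ℝ) * u j ^ 2 := by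
        rw [Finset.sum_congr rfl (fun m hm => by rw [hZ0 m hm, sub_zero]),
          Finset.sum_const, nsmul_eq_mul]
      rw [e]
      apply mul_le_mul_of_nonneg_right _ (sq_nonneg _)
      exact_mod_cast hZcard
    have step2 : ∀ m ∈ Z, (u j - u m) ^ 2 ≤ B * ((u j - u m) ^ 2 * Ksh h s (j - m)) := by
      intro m hm
      obtain ⟨hm1, _⟩ := Finset.mem_sdiff.1 hm
      rw [Finset.mem_Ioc] at hm1
      have hjm : j - m ≠ 0 := by omega
      have habs2 : |((j - m : ℤ) : ℝ)| ≤ (2*N : ℝ) := by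
        rw [← Int.cast_abs]
        have h9 : |j - m| ≤ 2*(N:ℤ) := by
          rw [abs_of_nonpos (by omega : j - m ≤ 0)]; omega
        exact_mod_cast h9
      have hKlb := Ksh_lb hs0 hs1 hh (m := j - m) hjm
      have hpow : |((j-m:ℤ):ℝ)| ^ (1+2*s) ≤ ((2*N:ℝ)) ^ (1+2*s) :=
        Real.rpow_le_rpow (abs_nonneg _) habs2 (by linarith)
      have h1 : (0:ℝ) < h ^ (2*s) := Real.rpow_pos_of_pos hh _
      have hjm1 : (1:ℝ) ≤ |((j-m:ℤ):ℝ)| := one_le_abs_cast hjm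
      have h2 : (0:ℝ) < |((j-m:ℤ):ℝ)| ^ (1+2*s) :=
        Real.rpow_pos_of_pos (by linarith) _
      have h3 : (0:ℝ) < ((2*N:ℝ)) ^ (1+2*s) := Real.rpow_pos_of_pos (by positivity) _
      have hK0' : 0 ≤ Ksh h s (j - m) := hK0 _
      have hBK : 1 ≤ B * Ksh h s (j - m) := by
        have h5 : c0 s ≤ Ksh h s (j - m) * (2 * h ^ (2*s) * |((j-m:ℤ):ℝ)| ^ (1+2*s)) :=
          (div_le_iff₀ (by positivity)).1 hKlb
        rw [hBdef, div_mul_eq_mul_div, le_div_iff₀ hc, one_mul]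
        nlinarith [mul_le_mul_of_nonneg_left hpow
          (mul_nonneg (mul_nonneg (by norm_num : (0:ℝ) ≤ 2) h1.le) hK0')]
      calc (u j - u m) ^ 2 = (u j - u m) ^ 2 * 1 := (mul_one _).symm
        _ ≤ (u j - u m) ^ 2 * (B * Ksh h s (j - m)) :=
            mul_le_mul_of_nonneg_left hBK (sq_nonneg _)
        _ = B * ((u j - u m) ^ 2 * Ksh h s (j - m)) := by ring
    calc (N:ℝ) * u j ^ 2 ≤ ∑ m ∈ Z, (u j - u m) ^ 2 := step1
      _ ≤ ∑ m ∈ Z, B * ((u j - u m) ^ 2 * Ksh h s (j - m)) := Finset.sum_le_sum step2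
      _ = B * ∑ m ∈ Z, (u j - u m) ^ 2 * Ksh h s (j - m) := by rw [Finset.mul_sum]
      _ ≤ B * g j := by
          apply mul_le_mul_of_nonneg_left _ hB.le
          exact Summable.sum_le_tsum Z (fun m _ => hterm j m) (F1 j)
  -- sum over S
  have e1 : (∑' j : ℤ, u j ^ 2) = ∑ j ∈ S, u j ^ 2 :=
    tsum_eq_sum (fun j hj => by rw [hmemS j hj]; ring)
  have F5 : (N:ℝ) * ∑ j ∈ S, u j ^ 2 ≤ B * ∑' j : ℤ, g j := by
    calc (N:ℝ) * ∑ j ∈ S, u j ^ 2 = ∑ j ∈ S, (N:ℝ) * u j ^ 2 := by rw [Finset.mul_sum]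
      _ ≤ ∑ j ∈ S, B * g j := Finset.sum_le_sum F4
      _ = B * ∑ j ∈ S, g j := by rw [Finset.mul_sum]
      _ ≤ B * ∑' j : ℤ, g j :=
          mul_le_mul_of_nonneg_left (Summable.sum_le_tsum S (fun j _ => hg0 j) F3) hB.le
  have hTg : (0:ℝ) ≤ ∑' j : ℤ, g j := tsum_nonneg hg0
  have key : h * ∑' j : ℤ, u j ^ 2 ≤
      ((2:ℝ) ^ (3 + 2*s) / c0 s) * h ^ (2*s) * ((N:ℝ)) ^ (2*s) *
        (h / 2 * ∑' j : ℤ, g j) := by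
    have h6 : ∑' j : ℤ, u j ^ 2 ≤ (B / N) * ∑' j : ℤ, g j := by
      rw [e1, div_mul_eq_mul_div, le_div_iff₀ hNR]
      calc (∑ j ∈ S, u j ^ 2) * N = (N:ℝ) * ∑ j ∈ S, u j ^ 2 := by ring
        _ ≤ B * ∑' j : ℤ, g j := F5
    have e2 : ((2*N:ℝ)) ^ (1 + 2*s) = 2 ^ (1 + 2*s) * ((N:ℝ) * (N:ℝ) ^ (2*s)) := by
      rw [Real.mul_rpow (by norm_num) (Nat.cast_nonneg N), Real.rpow_add hNR, Real.rpow_one]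
    have e3 : (2:ℝ) ^ (3 + 2*s) = 4 * 2 ^ (1 + 2*s) := by
      rw [show (3 + 2*s : ℝ) = 2 + (1 + 2*s) by ring, Real.rpow_add (by norm_num : (0:ℝ) < 2)]
      norm_num
    have h7 : h * ((B / N) * ∑' j : ℤ, g j) =
        ((2:ℝ) ^ (3 + 2*s) / c0 s) * h ^ (2*s) * ((N:ℝ)) ^ (2*s) *
          (h / 2 * ∑' j : ℤ, g j) := by
      rw [hBdef, e2, e3]
      field_simp
      ring
    calc h * ∑' j : ℤ, u j ^ 2 ≤ h * ((B / N) * ∑' j : ℤ, g j) :=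
        mul_le_mul_of_nonneg_left h6 hh.le
      _ = _ := h7
  -- take square roots
  rw [← Real.sqrt_eq_rpow, ← Real.sqrt_eq_rpow]
  have hsq : ∀ x : ℝ, 0 ≤ x → Real.sqrt (x ^ (2*s)) = x ^ s := by
    intro x hx
    rw [show x ^ (2*s) = (x ^ s) ^ (2:ℕ) by
        rw [← Real.rpow_natCast (x ^ s) 2, ← Real.rpow_mul hx]; norm_num [mul_comm],
      Real.sqrt_sq (Real.rpow_nonneg hx s)]
  have hhs : (0:ℝ) ≤ h ^ (2*s) := (Real.rpow_pos_of_pos hh _).le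
  have hNs : (0:ℝ) ≤ (N:ℝ) ^ (2*s) := Real.rpow_nonneg (Nat.cast_nonneg N) _
  calc Real.sqrt (h * ∑' j : ℤ, u j ^ 2)
      ≤ Real.sqrt (((2:ℝ) ^ (3 + 2*s) / c0 s) * h ^ (2*s) * ((N:ℝ)) ^ (2*s) *
          (h / 2 * ∑' j : ℤ, g j)) := Real.sqrt_le_sqrt key
    _ = Real.sqrt ((2:ℝ) ^ (3 + 2*s) / c0 s) * h ^ s * (N:ℝ) ^ s *
          Real.sqrt (h / 2 * ∑' j : ℤ, g j) := by
        rw [Real.sqrt_mul (mul_nonneg (mul_nonneg hD.le hhs) hNs) (h / 2 * ∑' j : ℤ, g j),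
          Real.sqrt_mul (mul_nonneg hD.le hhs) ((N:ℝ) ^ (2*s)),
          Real.sqrt_mul hD.le (h ^ (2*s)), hsq h hh.le, hsq (N:ℝ) (Nat.cast_nonneg N)]
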